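/- Fix n ≥ 1, let H be a Hermitian n×n complex matrix and L an n×n complex matrix, and define the Liouvillian 𝓛*ρ = -i(Hρ - ρH) + LρL† - (1/2)(L†Lρ + ρL†L). Let ξ : ℝ → ℂ be continuous, and let ϱ₁₁, ϱ₁₀, ϱ₀₀ : ℝ → M_n(ℂ) be differentiable functions satisfying the single-photon master equation (with S = I): ϱ₁₁'(t) = 𝓛*ϱ₁₁(t) + (ϱ₁₀(t)†L† - L†ϱ₁₀(t)†)ξ(t) + (Lϱ₁₀(t) - ϱ₁₀(t)L)ξ(t)*, ϱ₁₀'(t) = 𝓛*ϱ₁₀(t) + (ϱ₀₀(t)L† - L†ϱ₀₀(t))ξ(t), ϱ₀₀'(t) = 𝓛*ϱ₀₀(t), with initial conditions at time t₀ such that ϱ₀₀(t₀) and ϱ₁₁(t₀) are Hermitian. Then ϱ₀₀(t) and ϱ₁₁(t) are Hermitian for every t ≥ t₀. -/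

import Mathlib

open Matrix

attribute [local instance] Matrix.normedAddCommGroup Matrix.normedSpace

/-- The Liouvillian as a continuous `ℂ`-linear map on matrices. -/
noncomputable def LiouvT (n : ℕ) (H L : Matrix (Fin n) (Fin n) ℂ) :
    Matrix (Fin n) (Fin n) ℂ →L[ℂ] Matrix (Fin n) (Fin n) ℂ :=
  LinearMap.toContinuousLinearMap
  { toFun := fun ρ => -Complex.I • (H * ρ - ρ * H) + L * ρ * Lᴴ
        - ((1 : ℂ)/2) • (Lᴴ * L * ρ + ρ * (Lᴴ * L))
    map_add' := by
      intro a b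
      simp only [mul_add, add_mul, smul_add, smul_sub, sub_eq_add_neg, neg_add]
      abel
    map_smul' := by
      intro c a
      simp [smul_sub, smul_add, mul_smul_comm, smul_comm c, smul_mul_assoc] }

/-- Conjugate transpose as a continuous `ℝ`-linear map on matrices. -/
noncomputable def ctCLM (n : ℕ) : Matrix (Fin n) (Fin n) ℂ →L[ℝ] Matrix (Fin n) (Fin n) ℂ :=
  LinearMap.toContinuousLinearMap
  { toFun := fun ρ => ρᴴ
    map_add' := by intro a b; simp
    map_smul' := by
      intro c a
      ext i j
      simp [Matrix.conjTranspose_apply, Complex.star_def, Complex.conj_ofReal] }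

/-- A solution of a linear matrix ODE that vanishes at `t₀` vanishes for all `t ≥ t₀`
(uniqueness of solutions of linear ODEs, via Grönwall). -/
lemma zero_of_lin_ode {n : ℕ} (T : Matrix (Fin n) (Fin n) ℂ →L[ℂ] Matrix (Fin n) (Fin n) ℂ)
    (f : ℝ → Matrix (Fin n) (Fin n) ℂ) (hf : ∀ t, HasDerivAt f (T (f t)) t)
    (t₀ : ℝ) (h0 : f t₀ = 0) : ∀ t, t₀ ≤ t → f t = 0 := by
  intro t ht
  have key : Set.EqOn f (fun _ => (0 : Matrix (Fin n) (Fin n) ℂ)) (Set.Icc t₀ t) := by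
    apply ODE_solution_unique_of_mem_Icc_right
      (v := fun _ x => T x) (s := fun _ => Set.univ)
    · intro s
      exact fun _ => (T.lipschitz).lipschitzOnWith
    · exact fun s _ => (hf s).continuousAt.continuousWithinAt
    · exact fun s _ => (hf s).hasDerivWithinAt
    · exact fun _ _ => Set.mem_univ _
    · exact continuousOn_const
    · intro s _
      simpa using (hasDerivWithinAt_const s _ (0 : Matrix (Fin n) (Fin n) ℂ))
    · exact fun _ _ => Set.mem_univ _
    · exact h0
  exact key (Set.right_mem_Icc.2 ht)

/-- Hermiticity preservation for the single-photon master equation (with `S = I`, Hermitian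
Hamiltonian `H`): if `ϱ₁₁, ϱ₁₀, ϱ₀₀` solve `ϱ₁₁' = 𝓛*ϱ₁₁ + [ϱ₁₀†, L†]ξ + [L, ϱ₁₀]ξ*`,
`ϱ₁₀' = 𝓛*ϱ₁₀ + [ϱ₀₀, L†]ξ`, `ϱ₀₀' = 𝓛*ϱ₀₀`, where
`𝓛*ρ = -i(Hρ - ρH) + LρL† - (1/2)(L†Lρ + ρL†L)`, and `ϱ₀₀(t₀)` and `ϱ₁₁(t₀)` are Hermitian,
then `ϱ₀₀(t)` and `ϱ₁₁(t)` are Hermitian for all `t ≥ t₀`. -/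
theorem single_photon_master_equation_hermiticity_preserving (n : ℕ) (hn : 1 ≤ n)
    (H L : Matrix (Fin n) (Fin n) ℂ) (hH : Hᴴ = H)
    (𝓛 : Matrix (Fin n) (Fin n) ℂ → Matrix (Fin n) (Fin n) ℂ)
    (h𝓛 : ∀ ρ : Matrix (Fin n) (Fin n) ℂ,
      𝓛 ρ = -Complex.I • (H * ρ - ρ * H) + L * ρ * Lᴴ
        - ((1 : ℂ)/2) • (Lᴴ * L * ρ + ρ * (Lᴴ * L)))
    (ξ : ℝ → ℂ) (hξ : Continuous ξ)
    (ϱ11 ϱ10 ϱ00 : ℝ → Matrix (Fin n) (Fin n) ℂ)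
    (h11 : ∀ t : ℝ, HasDerivAt ϱ11
      (𝓛 (ϱ11 t) + ξ t • ((ϱ10 t)ᴴ * Lᴴ - Lᴴ * (ϱ10 t)ᴴ)
        + (starRingEnd ℂ) (ξ t) • (L * ϱ10 t - ϱ10 t * L)) t)
    (h10 : ∀ t : ℝ, HasDerivAt ϱ10
      (𝓛 (ϱ10 t) + ξ t • (ϱ00 t * Lᴴ - Lᴴ * ϱ00 t)) t)
    (h00 : ∀ t : ℝ, HasDerivAt ϱ00 (𝓛 (ϱ00 t)) t)
    (t₀ : ℝ) (h00init : (ϱ00 t₀)ᴴ = ϱ00 t₀) (h11init : (ϱ11 t₀)ᴴ = ϱ11 t₀) :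
    ∀ t : ℝ, t₀ ≤ t → (ϱ00 t)ᴴ = ϱ00 t ∧ (ϱ11 t)ᴴ = ϱ11 t := by
  set T := LiouvT n H L with hTdef
  have hT : ∀ ρ, 𝓛 ρ = T ρ := fun ρ => by rw [h𝓛]; rfl
  -- the Liouvillian commutes with conjugate transpose
  have hadj : ∀ ρ : Matrix (Fin n) (Fin n) ℂ, (𝓛 ρ)ᴴ = 𝓛 ρᴴ := by
    have h2 : star ((1:ℂ)/2) = (1:ℂ)/2 := by norm_num [Complex.ext_iff]
    intro ρ
    rw [h𝓛, h𝓛]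
    simp only [conjTranspose_add, conjTranspose_sub, conjTranspose_smul, conjTranspose_mul,
      conjTranspose_neg, conjTranspose_conjTranspose, hH, h2, star_neg, Complex.star_def,
      Complex.conj_I, Matrix.mul_assoc]
    module
  -- derivative of the conjugate transpose of a solution
  have hct : ∀ (f : ℝ → Matrix (Fin n) (Fin n) ℂ) (d : Matrix (Fin n) (Fin n) ℂ) (t : ℝ),
      HasDerivAt f d t → HasDerivAt (fun s => (f s)ᴴ) dᴴ t := by
    intro f d t hf
    exact (ctCLM n).hasFDerivAt.comp_hasDerivAt t hf
  intro t ht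
  constructor
  -- ϱ00
  · have hD : ∀ t, HasDerivAt (fun s => (ϱ00 s)ᴴ - ϱ00 s)
        (T ((ϱ00 t)ᴴ - ϱ00 t)) t := by
      intro s
      have := (hct ϱ00 _ s (h00 s)).sub (h00 s)
      rwa [hadj, hT, hT, ← map_sub] at this
    have := zero_of_lin_ode T _ hD t₀ (by rw [h00init, sub_self]) t ht
    exact sub_eq_zero.mp this
  -- ϱ11
  · have hD : ∀ t, HasDerivAt (fun s => (ϱ11 s)ᴴ - ϱ11 s)
        (T ((ϱ11 t)ᴴ - ϱ11 t)) t := by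
      intro s
      have h1 := (hct ϱ11 _ s (h11 s)).sub (h11 s)
      have hrhs : (𝓛 (ϱ11 s) + ξ s • ((ϱ10 s)ᴴ * Lᴴ - Lᴴ * (ϱ10 s)ᴴ)
            + (starRingEnd ℂ) (ξ s) • (L * ϱ10 s - ϱ10 s * L))ᴴ
          - (𝓛 (ϱ11 s) + ξ s • ((ϱ10 s)ᴴ * Lᴴ - Lᴴ * (ϱ10 s)ᴴ)
            + (starRingEnd ℂ) (ξ s) • (L * ϱ10 s - ϱ10 s * L))
          = T ((ϱ11 s)ᴴ - ϱ11 s) := by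
        simp only [conjTranspose_add, conjTranspose_smul, conjTranspose_sub, conjTranspose_mul,
          conjTranspose_conjTranspose, hadj, Complex.star_def, Complex.conj_conj]
        rw [hT, hT, map_sub]
        abel
      rwa [hrhs] at h1
    have := zero_of_lin_ode T _ hD t₀ (by rw [h11init, sub_self]) t ht
    exact sub_eq_zero.mp this
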